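/- (gen preserves types.) For every ground type τ and every term t with t : τ, the generalised term gen_τ(t) again satisfies gen_τ(t) : τ (for any choice of fresh variables used in computing gen_τ(t)). -/

import Mathlib

/-- First-order terms over countably infinite sets of variables (ℕ)
and function symbols (ℕ). -/
inductive Term : Type where
  | var : ℕ → Term
  | app : ℕ → List Term → Term

namespace Term

/-- Applying a substitution (a mapping from variables to terms) homomorphically. -/
def subst (θ : ℕ → Term) : Term → Term
  | var v => θ v
  | app f ts => app f (ts.attach.map (fun x => x.1.subst θ))
decreasing_by
  have := List.sizeOf_lt_of_mem x.2
  simp only [Term.app.sizeOf_spec]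
  omega

/-- A term is ground if it contains no variables. -/
inductive Ground : Term → Prop where
  | app : ∀ f ts, (∀ t ∈ ts, Ground t) → Ground (app f ts)

/-- The variable `v` occurs in the term. -/
inductive Occurs (v : ℕ) : Term → Prop where
  | var : Occurs v (var v)
  | app : ∀ f ts t, t ∈ ts → Occurs v t → Occurs v (app f ts)

/-- `s` is an instance of `t` if `s = tθ` for some substitution `θ`. -/
def IsInstanceOf (s t : Term) : Prop := ∃ θ : ℕ → Term, t.subst θ = s

/-- Two terms are variants if each is an instance of the other. -/
def Variant (s t : Term) : Prop := s.IsInstanceOf t ∧ t.IsInstanceOf s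

end Term

/-- Types: type variables, the distinguished 0-ary constructors
`static`, `dynamic`, `nonvar`, and other constructors applied to types. -/
inductive Ty : Type where
  | var : ℕ → Ty
  | static : Ty
  | dynamic : Ty
  | nonvar : Ty
  | con : ℕ → List Ty → Ty

namespace Ty

/-- Applying a type substitution. -/
def subst (σ : ℕ → Ty) : Ty → Ty
  | var v => σ v
  | static => static
  | dynamic => dynamic
  | nonvar => nonvar
  | con c args => con c (args.attach.map (fun x => x.1.subst σ))
decreasing_by
  have := List.sizeOf_lt_of_mem x.2
  simp only [Ty.con.sizeOf_spec]
  omega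

/-- A type is ground if it contains no type variables. -/
inductive Ground : Ty → Prop where
  | static : Ground static
  | dynamic : Ground dynamic
  | nonvar : Ground nonvar
  | con : ∀ c args, (∀ τ ∈ args, Ground τ) → Ground (con c args)

/-- All type variables of the type are below `n`. -/
inductive VarsBelow (n : ℕ) : Ty → Prop where
  | var : ∀ v, v < n → VarsBelow n (var v)
  | static : VarsBelow n static
  | dynamic : VarsBelow n dynamic
  | nonvar : VarsBelow n nonvar
  | con : ∀ c args, (∀ τ ∈ args, VarsBelow n τ) → VarsBelow n (con c args)

end Ty

/-- A type definition `c(V₁,…,Vₙ) → f₁(T₁¹,…) ; … ; f_k(T_k¹,…)` for an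
`n`-ary type constructor: the variables are represented by `0,…,arity-1`,
the alternatives are pairs of a function symbol and the list of argument types;
the function symbols are distinct and the argument types only use
variables among `0,…,arity-1`. -/
structure TypeDef where
  arity : ℕ
  alts : List (ℕ × List Ty)
  alts_nonempty : alts ≠ []
  alts_nodup : (alts.map Prod.fst).Nodup
  vars_bound : ∀ p ∈ alts, ∀ τ ∈ p.2, Ty.VarsBelow arity τ

/-- A type system: exactly one type definition for every type constructor
other than `static`, `dynamic` and `nonvar`. -/
structure TypeSystem where
  defs : ℕ → TypeDef

mutual
/-- The type judgement `t : τ` relative to the type system `Γ`. -/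
inductive HasType (Γ : TypeSystem) : Term → Ty → Prop where
  | dyn (t : Term) : HasType Γ t .dynamic
  | stat (t : Term) : t.Ground → HasType Γ t .static
  | nv (f : ℕ) (ts : List Term) : HasType Γ (.app f ts) .nonvar
  | con (c : ℕ) (σ : ℕ → Ty) (f : ℕ) (Ts : List Ty) (ts : List Term)
      (hσ : ∀ v, (σ v).Ground)
      (hmem : (f, Ts) ∈ (Γ.defs c).alts)
      (hargs : HasTypeArgs Γ ts (Ts.map (Ty.subst σ))) :
      HasType Γ (.app f ts) (.con c ((List.range (Γ.defs c).arity).map σ))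

/-- `HasTypeArgs Γ ts τs` : the terms `ts` pointwise have the types `τs`. -/
inductive HasTypeArgs (Γ : TypeSystem) : List Term → List Ty → Prop where
  | nil : HasTypeArgs Γ [] []
  | cons {t τ ts τs} : HasType Γ t τ → HasTypeArgs Γ ts τs →
      HasTypeArgs Γ (t :: ts) (τ :: τs)
end

/-- Atoms `p(t₁,…,tₙ)` over a countably infinite set of predicate symbols (ℕ). -/
structure Atom where
  pred : ℕ
  args : List Term

namespace Atom

/-- Substitutions apply to atoms argumentwise. -/
def subst (θ : ℕ → Term) (A : Atom) : Atom := ⟨A.pred, A.args.map (Term.subst θ)⟩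

/-- `B` is an instance of `A`. -/
def IsInstanceOf (B A : Atom) : Prop := ∃ θ : ℕ → Term, A.subst θ = B

/-- Two atoms are variants if each is an instance of the other. -/
def Variant (A B : Atom) : Prop := A.IsInstanceOf B ∧ B.IsInstanceOf A

end Atom

/-- A division: a set of expressions `p(τ₁,…,τₙ)` (represented as pairs of a
predicate symbol and a list of types), with all types ground and at most one
division per predicate. -/
def IsDivision (Δ : Set (ℕ × List Ty)) : Prop :=
  (∀ d ∈ Δ, ∀ τ ∈ d.2, τ.Ground) ∧
  (∀ d ∈ Δ, ∀ d' ∈ Δ, d.1 = d'.1 → d = d')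

/-- An atom `p(t₁,…,tₙ)` is safe wrt `Δ` iff there is `p(τ₁,…,τₙ) ∈ Δ`
with `tᵢ : τᵢ` for all `i`. -/
def SafeAtom (Γ : TypeSystem) (Δ : Set (ℕ × List Ty)) (A : Atom) : Prop :=
  ∃ τs : List Ty, (A.pred, τs) ∈ Δ ∧ HasTypeArgs Γ A.args τs

mutual
/-- `Gen Γ τ t s L`: `s` is a result of the partial generalisation mapping
`gen_τ(t)`, where `L` records (in order) the fresh variables chosen. -/
inductive Gen (Γ : TypeSystem) : Ty → Term → Term → List ℕ → Prop where
  | static (t : Term) : Gen Γ .static t t []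
  | dynamic (t : Term) (v : ℕ) : Gen Γ .dynamic t (.var v) [v]
  | nonvar (f : ℕ) (ts : List Term) (vs : List ℕ) (h : vs.length = ts.length) :
      Gen Γ .nonvar (.app f ts) (.app f (vs.map Term.var)) vs
  | con (c : ℕ) (σ : ℕ → Ty) (f : ℕ) (Ts : List Ty) (ts ss : List Term) (L : List ℕ)
      (hσ : ∀ v, (σ v).Ground)
      (hmem : (f, Ts) ∈ (Γ.defs c).alts)
      (hargs : GenArgs Γ (Ts.map (Ty.subst σ)) ts ss L) :
      Gen Γ (.con c ((List.range (Γ.defs c).arity).map σ)) (.app f ts) (.app f ss) L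

/-- Pointwise generalisation of a list of terms, collecting the fresh variables. -/
inductive GenArgs (Γ : TypeSystem) : List Ty → List Term → List Term → List ℕ → Prop where
  | nil : GenArgs Γ [] [] [] []
  | cons {τ t s L τs ts ss Ls} : Gen Γ τ t s L → GenArgs Γ τs ts ss Ls →
      GenArgs Γ (τ :: τs) (t :: ts) (s :: ss) (L ++ Ls)
end

/-- `GenAtom Γ Δ A B L`: `B` is a result of `gen_Δ(A)` with fresh variables `L`. -/
def GenAtom (Γ : TypeSystem) (Δ : Set (ℕ × List Ty)) (A B : Atom) (L : List ℕ) : Prop :=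
  B.pred = A.pred ∧
  ∃ τs : List Ty, (A.pred, τs) ∈ Δ ∧ HasTypeArgs Γ A.args τs ∧
    GenArgs Γ τs A.args B.args L

lemma Ty.subst_con (σ : ℕ → Ty) (c : ℕ) (args : List Ty) :
    Ty.subst σ (.con c args) = .con c (args.map (Ty.subst σ)) := by
  rw [Ty.subst]
  congr 1
  exact List.attach_map_val (l := args) (f := Ty.subst σ)

lemma Ty.subst_ground (σ : ℕ → Ty) (hσ : ∀ v, (σ v).Ground) :
    ∀ τ : Ty, (τ.subst σ).Ground
  | .var v => by simpa [Ty.subst] using hσ v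
  | .static => by rw [Ty.subst]; exact .static
  | .dynamic => by rw [Ty.subst]; exact .dynamic
  | .nonvar => by rw [Ty.subst]; exact .nonvar
  | .con c args => by
      rw [Ty.subst_con]
      refine .con _ _ ?_
      intro τ hτ
      rw [List.mem_map] at hτ
      obtain ⟨a, ha, rfl⟩ := hτ
      have : sizeOf a < sizeOf (Ty.con c args) := by
        have := List.sizeOf_lt_of_mem ha
        simp only [Ty.con.sizeOf_spec]; omega
      exact Ty.subst_ground σ hσ a
termination_by τ => sizeOf τ

lemma Ty.subst_congr {n : ℕ} {τ : Ty} {σ σ' : ℕ → Ty} (h : Ty.VarsBelow n τ)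
    (hagree : ∀ v < n, σ v = σ' v) : τ.subst σ = τ.subst σ' := by
  induction h with
  | var v hv => simp [Ty.subst, hagree v hv]
  | static => rw [Ty.subst, Ty.subst]
  | dynamic => rw [Ty.subst, Ty.subst]
  | nonvar => rw [Ty.subst, Ty.subst]
  | con c args h ih =>
      rw [Ty.subst_con, Ty.subst_con]
      congr 1
      exact List.map_congr_left ih

lemma hasType_con_inv {Γ : TypeSystem} {f c : ℕ} {ts : List Term} {args : List Ty}
    (h : HasType Γ (.app f ts) (.con c args)) :
    ∃ (σ : ℕ → Ty) (Ts : List Ty), (∀ v, (σ v).Ground) ∧ (f, Ts) ∈ (Γ.defs c).alts ∧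
      HasTypeArgs Γ ts (Ts.map (Ty.subst σ)) ∧
      args = (List.range (Γ.defs c).arity).map σ := by
  cases h with
  | con c σ f Ts ts hσ hmem hargs => exact ⟨σ, Ts, hσ, hmem, hargs, rfl⟩

/-- **gen preserves types.** For every ground type `τ` and every term `t` with
`t : τ`, the generalised term `gen_τ(t)` again satisfies `gen_τ(t) : τ`
(for any choice of fresh variables used in computing `gen_τ(t)`). -/
theorem gen_preserves_type (Γ : TypeSystem) (τ : Ty) (t : Term) (hτ : τ.Ground)
    (ht : HasType Γ t τ) (s : Term) (L : List ℕ) (hgen : Gen Γ τ t s L) :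
    HasType Γ s τ :=
  Gen.rec (Γ := Γ)
    (motive_1 := fun τ t s _ _ => τ.Ground → HasType Γ t τ → HasType Γ s τ)
    (motive_2 := fun τs ts ss _ _ => (∀ τ ∈ τs, τ.Ground) → HasTypeArgs Γ ts τs →
      HasTypeArgs Γ ss τs)
    (fun _ _ ht => ht)
    (fun _ v _ _ => HasType.dyn _)
    (fun f _ vs _ _ _ => HasType.nv f (vs.map Term.var))
    (fun c σ f Ts ts ss L hσ hmem _ ih hτ ht => by
      obtain ⟨σ', Ts', hσ', hmem', hargs', heq⟩ := hasType_con_inv ht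
      · have hTs : Ts' = Ts := by
          have := List.inj_on_of_nodup_map (Γ.defs c).alts_nodup hmem' hmem rfl
          exact congrArg Prod.snd this
        rw [hTs] at hmem' hargs'
        have hagree : ∀ v < (Γ.defs c).arity, σ' v = σ v := by
          intro v hv
          have h2 := (List.map_inj_left).mp heq.symm v (List.mem_range.mpr hv)
          exact h2
        have hsub : Ts.map (Ty.subst σ') = Ts.map (Ty.subst σ) :=
          List.map_congr_left (fun τ' hτ' =>
            Ty.subst_congr ((Γ.defs c).vars_bound _ hmem' _ hτ') hagree)
        rw [hsub] at hargs'
        exact HasType.con c σ f Ts ss hσ hmem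
          (ih (fun τ' hτ' => by
            rw [List.mem_map] at hτ'
            obtain ⟨a, _, rfl⟩ := hτ'
            exact Ty.subst_ground σ hσ a) hargs'))
    (fun _ h => h)
    (fun _ _ ih1 ih2 hg ht => by
      cases ht with
      | cons h1 h2 =>
        exact HasTypeArgs.cons (ih1 (hg _ (List.mem_cons_self)) h1)
          (ih2 (fun τ' hτ' => hg _ (List.mem_cons_of_mem _ hτ')) h2))
    hgen hτ ht
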